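/- Marginal gain formula for information centrality: for a connected graph G on n vertices, target node v, and edge e with G∖{e} connected, with a = 1 − b_eᵀL†b_e, b = b_eᵀL^{2†}b_e, c = ((L†b_e)_v)², the change I_v({e}) − I_v(∅) equals −(nb + n²c) / [(n a L†_{vv} + n c + a·tr(L†) + b)(n L†_{vv} + tr(L†))]. -/

import Mathlib

open Matrix Finset
open scoped Classical

/-- The four Penrose identities: `B` is the Moore–Penrose pseudoinverse of `A`. -/
def IsMoorePenrose {m : Type*} [Fintype m] [DecidableEq m]
    (A B : Matrix m m ℝ) : Prop :=
  A * B * A = A ∧ B * A * B = B ∧ (A * B)ᵀ = A * B ∧ (B * A)ᵀ = B * A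

/-- The Moore–Penrose pseudoinverse (chosen when it exists, `0` otherwise). -/
noncomputable def pinv {m : Type*} [Fintype m] [DecidableEq m]
    (A : Matrix m m ℝ) : Matrix m m ℝ :=
  if h : ∃ B, IsMoorePenrose A B then h.choose else 0

/-- Signed incidence vector `b_{xy} = e_x - e_y`. -/
def incVec {n : ℕ} (x y : Fin n) : Fin n → ℝ :=
  fun i => (if i = x then 1 else 0) - (if i = y then 1 else 0)

/-- Effective resistance between `x` and `y` in `G`. -/
noncomputable def effRes {n : ℕ} (G : SimpleGraph (Fin n)) (x y : Fin n) : ℝ :=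
  incVec x y ⬝ᵥ (pinv (G.lapMatrix ℝ)).mulVec (incVec x y)

/-- Resistance distance of `v`: sum of effective resistances to all other vertices. -/
noncomputable def resDist {n : ℕ} (G : SimpleGraph (Fin n)) (v : Fin n) : ℝ :=
  ∑ u ∈ Finset.univ.erase v, effRes G u v

/-- Information centrality of `v`. -/
noncomputable def infoCent {n : ℕ} (G : SimpleGraph (Fin n)) (v : Fin n) : ℝ :=
  (n : ℝ) / resDist G v

section MP
variable {m : Type*} [Fintype m] [DecidableEq m]

lemma mp_unique {A B C : Matrix m m ℝ} (hB : IsMoorePenrose A B)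
    (hC : IsMoorePenrose A C) : B = C := by
  obtain ⟨b1, b2, b3, b4⟩ := hB
  obtain ⟨c1, c2, c3, c4⟩ := hC
  have h1 : Aᵀ * (Cᵀ * Aᵀ) = Aᵀ := by
    have := congrArg Matrix.transpose c1
    simpa [Matrix.transpose_mul, mul_assoc] using this
  have h2 : Aᵀ * (Bᵀ * Aᵀ) = Aᵀ := by
    have := congrArg Matrix.transpose b1
    simpa [Matrix.transpose_mul, mul_assoc] using this
  have hAB : A * B = A * C := by
    calc A * B = Bᵀ * Aᵀ := by rw [← b3, transpose_mul]
    _ = Bᵀ * (Aᵀ * (Cᵀ * Aᵀ)) := by rw [h1]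
    _ = (Bᵀ * Aᵀ) * (Cᵀ * Aᵀ) := by rw [mul_assoc]
    _ = (A * B) * (A * C) := by rw [← transpose_mul, ← transpose_mul, b3, c3]
    _ = (A * B * A) * C := by rw [← mul_assoc]
    _ = A * C := by rw [b1]
  have hBA : B * A = C * A := by
    calc B * A = Aᵀ * Bᵀ := by rw [← b4, transpose_mul]
    _ = (Aᵀ * (Cᵀ * Aᵀ)) * Bᵀ := by rw [h1]
    _ = (C * A)ᵀ * (B * A)ᵀ := by simp only [transpose_mul, mul_assoc]
    _ = (C * A) * (B * A) := by rw [b4, c4]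
    _ = C * (A * B * A) := by rw [mul_assoc C A (B * A), ← mul_assoc A B A]
    _ = C * A := by rw [b1]
  calc B = B * A * B := b2.symm
  _ = B * (A * C) := by rw [mul_assoc, hAB]
  _ = (B * A) * C := by rw [mul_assoc]
  _ = (C * A) * C := by rw [hBA]
  _ = C := c2

lemma pinv_spec {A B : Matrix m m ℝ} (h : IsMoorePenrose A B) : pinv A = B := by
  have hex : ∃ B, IsMoorePenrose A B := ⟨B, h⟩
  rw [pinv, dif_pos hex]
  exact mp_unique hex.choose_spec h

end MP
section Lap
variable {n : ℕ}

/-- The matrix with all entries `1/n`. -/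
noncomputable def Jmat (n : ℕ) : Matrix (Fin n) (Fin n) ℝ := Matrix.of fun _ _ => (n : ℝ)⁻¹

lemma Jmat_transpose : (Jmat n)ᵀ = Jmat n := rfl

lemma Jmat_mul_Jmat (hn : 0 < n) : Jmat n * Jmat n = Jmat n := by
  have h : (n:ℝ) ≠ 0 := Nat.cast_ne_zero.2 hn.ne'
  ext i j
  simp only [Jmat, Matrix.mul_apply, Matrix.of_apply, Finset.sum_const, Finset.card_univ,
    Fintype.card_fin, nsmul_eq_mul]
  field_simp

lemma lap_mul_Jmat (H : SimpleGraph (Fin n)) : H.lapMatrix ℝ * Jmat n = 0 := by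
  ext i j
  have h := congrFun (H.lapMatrix_mulVec_const_eq_zero (R := ℝ)) i
  simp only [Matrix.mulVec, dotProduct, mul_one, Pi.zero_apply] at h
  simp only [Jmat, Matrix.mul_apply, Matrix.of_apply, Matrix.zero_apply, ← Finset.sum_mul, h,
    zero_mul]

lemma Jmat_mul_lap (H : SimpleGraph (Fin n)) : Jmat n * H.lapMatrix ℝ = 0 := by
  have h := congrArg Matrix.transpose (lap_mul_Jmat H)
  rw [Matrix.transpose_mul, Jmat_transpose, (H.isSymm_lapMatrix (R := ℝ)).eq,
    Matrix.transpose_zero] at h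
  exact h

lemma dot_Jmat (x : Fin n → ℝ) : x ⬝ᵥ (Jmat n) *ᵥ x = (∑ i, x i)^2 * (n:ℝ)⁻¹ := by
  have : x ⬝ᵥ (Jmat n) *ᵥ x = ∑ i, x i * ((n:ℝ)⁻¹ * ∑ k, x k) := by
    simp [Jmat, Matrix.mulVec, dotProduct, Finset.mul_sum]
  rw [this, ← Finset.sum_mul]
  ring

lemma posDef_Mmat {H : SimpleGraph (Fin n)} (hn : 0 < n) (hH : H.Connected) :
    (H.lapMatrix ℝ + Jmat n).PosDef := by
  rw [Matrix.posDef_iff_dotProduct_mulVec]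
  constructor
  · rw [Matrix.IsHermitian, Matrix.conjTranspose_eq_transpose_of_trivial, Matrix.transpose_add,
      (H.isSymm_lapMatrix (R := ℝ)).eq, Jmat_transpose]
  · intro x hx
    rw [star_trivial, Matrix.add_mulVec, dotProduct_add, dot_Jmat]
    have hL : 0 ≤ x ⬝ᵥ H.lapMatrix ℝ *ᵥ x := by
      simpa [star_trivial] using (SimpleGraph.posSemidef_lapMatrix ℝ H).dotProduct_mulVec_nonneg x
    have hJ : 0 ≤ (∑ i, x i)^2 * (n:ℝ)⁻¹ := by positivity
    rcases hL.lt_or_eq with h | h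
    · linarith
    · -- quadratic form vanishes: x is constant
      have hconst : ∀ i j, x i = x j := by
        have := (H.lapMatrix_toLinearMap₂'_apply'_eq_zero_iff_forall_reachable x).1 ?_
        · exact fun i j => this i j (hH.preconnected i j)
        · rw [Matrix.toLinearMap₂'_apply']
          exact h.symm
      have hi : Nonempty (Fin n) := ⟨⟨0, hn⟩⟩
      obtain ⟨i0⟩ := hi
      rcases eq_or_ne (x i0) 0 with h0 | h0
      · exact absurd (funext fun i => (hconst i i0).trans h0) hx
      · have hs : ∑ i, x i = n * x i0 := by
          rw [Finset.sum_congr rfl fun i _ => hconst i i0]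
          simp [Finset.card_univ, mul_comm]
        have : (0:ℝ) < (∑ i, x i)^2 * (n:ℝ)⁻¹ := by
          have hn' : (0:ℝ) < n := by exact_mod_cast hn
          rw [hs]
          positivity
        linarith

lemma isMP_lap {H : SimpleGraph (Fin n)} (hn : 0 < n) (hH : H.Connected) :
    IsMoorePenrose (H.lapMatrix ℝ) ((H.lapMatrix ℝ + Jmat n)⁻¹ - Jmat n) := by
  set L := H.lapMatrix ℝ with hLdef
  set J := Jmat n with hJdef
  set M := L + J with hMdef
  have hU : IsUnit M.det := (Matrix.isUnit_iff_isUnit_det M).1 (posDef_Mmat hn hH).isUnit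
  have hMi : M * M⁻¹ = 1 := Matrix.mul_nonsing_inv _ hU
  have hiM : M⁻¹ * M = 1 := Matrix.nonsing_inv_mul _ hU
  have hLJ : L * J = 0 := lap_mul_Jmat H
  have hJL : J * L = 0 := Jmat_mul_lap H
  have hJJ : J * J = J := Jmat_mul_Jmat hn
  have hMJ : M * J = J := by rw [hMdef, add_mul, hLJ, hJJ, zero_add]
  have hJM : J * M = J := by rw [hMdef, mul_add, hJL, hJJ, zero_add]
  have hJMi : J * M⁻¹ = J := by
    calc J * M⁻¹ = (J * M) * M⁻¹ := by rw [hJM]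
    _ = J * (M * M⁻¹) := by rw [mul_assoc]
    _ = J := by rw [hMi, mul_one]
  have hMiJ : M⁻¹ * J = J := by
    calc M⁻¹ * J = M⁻¹ * (M * J) := by rw [hMJ]
    _ = (M⁻¹ * M) * J := by rw [mul_assoc]
    _ = J := by rw [hiM, one_mul]
  have hLM : L = M - J := by rw [hMdef, add_sub_cancel_right]
  have hLB : L * (M⁻¹ - J) = 1 - J := by
    rw [hLM, Matrix.sub_mul, Matrix.mul_sub, Matrix.mul_sub, hMi, hMJ, hJMi, hJJ, sub_self,
      sub_zero]
  have hBL : (M⁻¹ - J) * L = 1 - J := by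
    rw [hLM, Matrix.mul_sub, Matrix.sub_mul, Matrix.sub_mul, hiM, hMiJ, hJM, hJJ, sub_self,
      sub_zero]
  have hsymm1 : ((1 : Matrix (Fin n) (Fin n) ℝ) - J)ᵀ = 1 - J := by
    rw [Matrix.transpose_sub, Matrix.transpose_one, hJdef, Jmat_transpose]
  have hJB : J * (M⁻¹ - J) = 0 := by rw [Matrix.mul_sub, hJMi, hJJ, sub_self]
  have hBJ : (M⁻¹ - J) * J = 0 := by rw [Matrix.sub_mul, hMiJ, hJJ, sub_self]
  refine ⟨?_, ?_, ?_, ?_⟩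
  · rw [hLB, Matrix.sub_mul, one_mul, hJL, sub_zero]
  · rw [mul_assoc, hLB, Matrix.mul_sub, mul_one, hBJ, sub_zero]
  · rw [hLB, hsymm1]
  · rw [hBL, hsymm1]

lemma pinv_lap_eq {H : SimpleGraph (Fin n)} (hn : 0 < n) (hH : H.Connected) :
    pinv (H.lapMatrix ℝ) = (H.lapMatrix ℝ + Jmat n)⁻¹ - Jmat n :=
  pinv_spec (isMP_lap hn hH)

end Lap
section Props
variable {n : ℕ} {H : SimpleGraph (Fin n)}

lemma Ld_transpose (hn : 0 < n) (hH : H.Connected) :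
    (pinv (H.lapMatrix ℝ))ᵀ = pinv (H.lapMatrix ℝ) := by
  have hM : (H.lapMatrix ℝ + Jmat n)ᵀ = H.lapMatrix ℝ + Jmat n := by
    rw [Matrix.transpose_add, (H.isSymm_lapMatrix (R := ℝ)).eq, Jmat_transpose]
  rw [pinv_lap_eq hn hH, Matrix.transpose_sub, Matrix.transpose_nonsing_inv, hM, Jmat_transpose]

lemma lap_pinv_props (hn : 0 < n) (hH : H.Connected) :
    H.lapMatrix ℝ * pinv (H.lapMatrix ℝ) = 1 - Jmat n ∧
    Jmat n * pinv (H.lapMatrix ℝ) = 0 ∧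
    pinv (H.lapMatrix ℝ) * Jmat n = 0 := by
  rw [pinv_lap_eq hn hH]
  set L := H.lapMatrix ℝ with hLdef
  set J := Jmat n with hJdef
  set M := L + J with hMdef
  have hU : IsUnit M.det := (Matrix.isUnit_iff_isUnit_det M).1 (posDef_Mmat hn hH).isUnit
  have hMi : M * M⁻¹ = 1 := Matrix.mul_nonsing_inv _ hU
  have hiM : M⁻¹ * M = 1 := Matrix.nonsing_inv_mul _ hU
  have hLJ : L * J = 0 := lap_mul_Jmat H
  have hJL : J * L = 0 := Jmat_mul_lap H
  have hJJ : J * J = J := Jmat_mul_Jmat hn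
  have hMJ : M * J = J := by rw [hMdef, add_mul, hLJ, hJJ, zero_add]
  have hJM : J * M = J := by rw [hMdef, mul_add, hJL, hJJ, zero_add]
  have hJMi : J * M⁻¹ = J := by
    calc J * M⁻¹ = (J * M) * M⁻¹ := by rw [hJM]
    _ = J * (M * M⁻¹) := by rw [mul_assoc]
    _ = J := by rw [hMi, mul_one]
  have hMiJ : M⁻¹ * J = J := by
    calc M⁻¹ * J = M⁻¹ * (M * J) := by rw [hMJ]
    _ = (M⁻¹ * M) * J := by rw [mul_assoc]
    _ = J := by rw [hiM, one_mul]
  have hLM : L = M - J := by rw [hMdef, add_sub_cancel_right]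
  refine ⟨?_, ?_, ?_⟩
  · rw [hLM, Matrix.sub_mul, Matrix.mul_sub, Matrix.mul_sub, hMi, hMJ, hJMi, hJJ, sub_self,
      sub_zero]
  · rw [Matrix.mul_sub, hJMi, hJJ, sub_self]
  · rw [Matrix.sub_mul, hMiJ, hJJ, sub_self]

lemma Ld_symm_apply (hn : 0 < n) (hH : H.Connected) (i j : Fin n) :
    pinv (H.lapMatrix ℝ) i j = pinv (H.lapMatrix ℝ) j i := by
  have h := congrFun (congrFun (Ld_transpose hn hH) j) i
  rw [Matrix.transpose_apply] at h
  exact h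

lemma Ld_rowsum (hn : 0 < n) (hH : H.Connected) (i : Fin n) :
    ∑ j, pinv (H.lapMatrix ℝ) i j = 0 := by
  have h := congrFun (congrFun (lap_pinv_props hn hH).2.2 i) i
  simp only [Matrix.mul_apply, Jmat, Matrix.of_apply, Matrix.zero_apply, ← Finset.sum_mul] at h
  have hn' : ((n:ℝ))⁻¹ ≠ 0 := by
    have : (n:ℝ) ≠ 0 := Nat.cast_ne_zero.2 hn.ne'
    simpa using this
  exact (mul_eq_zero.1 h).resolve_right hn'

lemma Ld_colsum (hn : 0 < n) (hH : H.Connected) (j : Fin n) :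
    ∑ i, pinv (H.lapMatrix ℝ) i j = 0 := by
  rw [Finset.sum_congr rfl fun i _ => Ld_symm_apply hn hH i j]
  exact Ld_rowsum hn hH j

lemma dot_incVec (A : Matrix (Fin n) (Fin n) ℝ) (x y : Fin n) :
    incVec x y ⬝ᵥ A *ᵥ incVec x y = A x x - A x y - A y x + A y y := by
  have hmv : ∀ i, (A *ᵥ incVec x y) i = A i x - A i y := by
    intro i
    simp [incVec, Matrix.mulVec, dotProduct, mul_sub, Finset.sum_sub_distrib, mul_ite, mul_one,
      mul_zero, Finset.sum_ite_eq']
  simp only [dotProduct, hmv, incVec]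
  simp only [sub_mul, ite_mul, one_mul, zero_mul, Finset.sum_sub_distrib, Finset.sum_ite_eq',
    Finset.mem_univ, if_true]
  ring

lemma resDist_eq (hn : 0 < n) (hH : H.Connected) (v : Fin n) :
    resDist H v = n * pinv (H.lapMatrix ℝ) v v + (pinv (H.lapMatrix ℝ)).trace := by
  set Ld := pinv (H.lapMatrix ℝ) with hLd
  have step : ∀ u, effRes H u v = Ld u u - Ld u v - Ld v u + Ld v v := fun u =>
    dot_incVec Ld u v
  unfold resDist
  rw [Finset.sum_congr rfl fun u _ => step u,
    Finset.sum_erase_eq_sub (Finset.mem_univ v)]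
  simp only [Finset.sum_add_distrib, Finset.sum_sub_distrib, Ld_rowsum hn hH, Ld_colsum hn hH,
    Finset.sum_const, Finset.card_univ, Fintype.card_fin, nsmul_eq_mul]
  have htr : ∑ u, Ld u u = Ld.trace := rfl
  rw [htr]
  have hc0 : ∑ x, Ld x v = 0 := Ld_colsum hn hH v
  have hr0 : ∑ x, Ld v x = 0 := Ld_rowsum hn hH v
  rw [hc0, hr0]
  ring

lemma sum_incVec {u v : Fin n} : ∑ i, incVec u v i = 0 := by
  simp [incVec, Finset.sum_sub_distrib]

lemma effRes_pos (hn : 0 < n) (hH : H.Connected) {u v : Fin n} (huv : u ≠ v) :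
    0 < effRes H u v := by
  have hPD : (H.lapMatrix ℝ + Jmat n)⁻¹.PosDef := (posDef_Mmat hn hH).inv
  have hJv : (Jmat n) *ᵥ incVec u v = 0 := by
    ext i
    simp [Jmat, Matrix.mulVec, dotProduct, ← Finset.mul_sum, sum_incVec]
  have hne : incVec u v ≠ 0 := by
    intro h
    have := congrFun h u
    simp [incVec, huv] at this
  unfold effRes
  rw [pinv_lap_eq hn hH, Matrix.sub_mulVec, dotProduct_sub, hJv, dotProduct_zero, sub_zero]
  simpa [star_trivial] using hPD.dotProduct_mulVec_pos hne

lemma resDist_pos (hn2 : 1 < n) (hH : H.Connected) (v : Fin n) : 0 < resDist H v := by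
  apply Finset.sum_pos (fun u hu => effRes_pos (by omega) hH (Finset.ne_of_mem_erase hu))
  rw [← Finset.card_pos, Finset.card_erase_of_mem (Finset.mem_univ v)]
  simp only [Finset.card_univ, Fintype.card_fin]
  omega

end Props
section Delete
variable {n : ℕ}

lemma lap_delete {G : SimpleGraph (Fin n)} {x y : Fin n} (hxy : G.Adj x y) :
    (G.deleteEdges {s(x, y)}).lapMatrix ℝ =
      G.lapMatrix ℝ - Matrix.vecMulVec (incVec x y) (incVec x y) := by
  have hne : x ≠ y := hxy.ne
  have hadj : ∀ i j, ((G.deleteEdges {s(x,y)}).adjMatrix ℝ) i j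
      = (G.adjMatrix ℝ) i j - (if (i = x ∧ j = y) ∨ (i = y ∧ j = x) then 1 else 0) := by
    intro i j
    simp only [SimpleGraph.adjMatrix_apply, SimpleGraph.deleteEdges_adj,
      Set.mem_singleton_iff, Sym2.eq_iff]
    by_cases h : (i = x ∧ j = y) ∨ (i = y ∧ j = x)
    · rcases h with ⟨rfl, rfl⟩ | ⟨rfl, rfl⟩ <;> simp [hxy, hxy.symm, hne, hne.symm]
    · simp [h]
  have hdeg : ∀ i, (((G.deleteEdges {s(x,y)}).degree i : ℝ))
      = (G.degree i : ℝ) - incVec x y i * incVec x y i := by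
    intro i
    rw [SimpleGraph.degree_eq_sum_if_adj, SimpleGraph.degree_eq_sum_if_adj]
    have hterm : ∀ j, (if (G.deleteEdges {s(x,y)}).Adj i j then (1:ℝ) else 0)
        = (if G.Adj i j then (1:ℝ) else 0)
          - (if (i = x ∧ j = y) ∨ (i = y ∧ j = x) then 1 else 0) := by
      intro j
      have h := hadj i j
      simpa only [SimpleGraph.adjMatrix_apply] using h
    rw [Finset.sum_congr rfl fun j _ => hterm j, Finset.sum_sub_distrib]
    congr 1
    by_cases hix : i = x
    · subst hix
      simp [hne, incVec, Finset.sum_ite_eq']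
    · by_cases hiy : i = y
      · subst hiy
        simp [hne.symm, hix, incVec, Finset.sum_ite_eq']
      · simp [hix, hiy, incVec]
  ext i j
  simp only [SimpleGraph.lapMatrix, Matrix.sub_apply, SimpleGraph.degMatrix,
    Matrix.diagonal_apply, Matrix.vecMulVec_apply]
  rw [hadj i j]
  by_cases hij : i = j
  · subst hij
    rw [if_pos rfl, if_pos rfl, hdeg i,
      if_neg (by rintro (⟨rfl, rfl⟩ | ⟨rfl, rfl⟩) <;> exact hne rfl)]
    ring
  · rw [if_neg hij, if_neg hij]
    have hbe : (if (i = x ∧ j = y) ∨ (i = y ∧ j = x) then (1:ℝ) else 0)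
        = -(incVec x y i * incVec x y j) := by
      by_cases h1 : i = x <;> by_cases h2 : i = y <;> by_cases h3 : j = x <;>
        by_cases h4 : j = y <;> simp_all [incVec]
    rw [hbe]
    ring

end Delete
section SM
variable {n : ℕ}

lemma vmv_mulVec (u v z : Fin n → ℝ) :
    (Matrix.vecMulVec u v) *ᵥ z = (v ⬝ᵥ z) • u := by
  ext i
  simp only [Matrix.mulVec, dotProduct, Matrix.vecMulVec_apply, Pi.smul_apply, smul_eq_mul]
  rw [Finset.sum_mul]
  exact Finset.sum_congr rfl fun k _ => by ring

lemma mul_vmv (A : Matrix (Fin n) (Fin n) ℝ) (u v : Fin n → ℝ) :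
    A * Matrix.vecMulVec u v = Matrix.vecMulVec (A *ᵥ u) v := by
  ext i j
  simp only [Matrix.mul_apply, Matrix.vecMulVec_apply, Matrix.mulVec, dotProduct,
    Finset.sum_mul]
  exact Finset.sum_congr rfl fun k _ => by ring

lemma vmv_mul (A : Matrix (Fin n) (Fin n) ℝ) (u v : Fin n → ℝ) :
    Matrix.vecMulVec u v * A = Matrix.vecMulVec u (Aᵀ *ᵥ v) := by
  ext i j
  simp only [Matrix.mul_apply, Matrix.vecMulVec_apply, Matrix.mulVec, dotProduct,
    Matrix.transpose_apply, Finset.mul_sum]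
  exact Finset.sum_congr rfl fun k _ => by ring

lemma vmv_transpose (u v : Fin n → ℝ) :
    (Matrix.vecMulVec u v)ᵀ = Matrix.vecMulVec v u := by
  ext i j
  simp [Matrix.vecMulVec_apply, mul_comm]

lemma vmv_zero_left (v : Fin n → ℝ) : Matrix.vecMulVec (0 : Fin n → ℝ) v = 0 := by
  ext i j; simp [Matrix.vecMulVec_apply]

lemma vmv_zero_right (v : Fin n → ℝ) : Matrix.vecMulVec v (0 : Fin n → ℝ) = 0 := by
  ext i j; simp [Matrix.vecMulVec_apply]

lemma vmv_trace (u v : Fin n → ℝ) : (Matrix.vecMulVec u v).trace = u ⬝ᵥ v := by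
  simp [Matrix.trace, Matrix.diag, Matrix.vecMulVec_apply, dotProduct]

lemma Jmat_mulVec_incVec {x y : Fin n} : (Jmat n) *ᵥ incVec x y = 0 := by
  ext i
  simp [Jmat, Matrix.mulVec, dotProduct, ← Finset.mul_sum, sum_incVec]

variable {G : SimpleGraph (Fin n)} {x y : Fin n}

lemma sherman (hG : G.Connected) (hxy : G.Adj x y)
    (hconn : (G.deleteEdges {s(x, y)}).Connected) :
    (1 - incVec x y ⬝ᵥ (pinv (G.lapMatrix ℝ)) *ᵥ incVec x y) ≠ 0 ∧
    pinv ((G.deleteEdges {s(x, y)}).lapMatrix ℝ) =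
      pinv (G.lapMatrix ℝ) + (1 - incVec x y ⬝ᵥ (pinv (G.lapMatrix ℝ)) *ᵥ incVec x y)⁻¹ •
        Matrix.vecMulVec ((pinv (G.lapMatrix ℝ)) *ᵥ incVec x y)
          ((pinv (G.lapMatrix ℝ)) *ᵥ incVec x y) := by
  have hn : 0 < n := x.pos
  set L := G.lapMatrix ℝ with hL
  set J := Jmat n with hJ
  set Ld := pinv L with hLdd
  set be := incVec x y with hbe
  set w := Ld *ᵥ be with hw
  set a := 1 - be ⬝ᵥ w with ha
  obtain ⟨hLLd, hJLd, hLdJ⟩ := lap_pinv_props (H := G) hn hG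
  have hLdT : Ldᵀ = Ld := Ld_transpose hn hG
  have hJbe : J *ᵥ be = 0 := Jmat_mulVec_incVec
  have hLw : L *ᵥ w = be := by
    rw [hw, Matrix.mulVec_mulVec, hLLd, Matrix.sub_mulVec, Matrix.one_mulVec, hJbe, sub_zero]
  have hJw : J *ᵥ w = 0 := by
    rw [hw, Matrix.mulVec_mulVec, hJLd, Matrix.zero_mulVec]
  have hbene : be ≠ 0 := by
    intro h
    have := congrFun h x
    simp [hbe, incVec, hxy.ne] at this
  have hwne : w ≠ 0 := by
    intro h
    rw [h, Matrix.mulVec_zero] at hLw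
    exact hbene hLw.symm
  have hLP : (G.deleteEdges {s(x, y)}).lapMatrix ℝ = L - Matrix.vecMulVec be be :=
    lap_delete hxy
  -- a ≠ 0
  have hane : a ≠ 0 := by
    intro ha0
    have hPD : ((G.deleteEdges {s(x, y)}).lapMatrix ℝ + J).PosDef := by
      convert posDef_Mmat (H := G.deleteEdges {s(x, y)}) hn hconn
    have hMPw : ((G.deleteEdges {s(x, y)}).lapMatrix ℝ + J) *ᵥ w = 0 := by
      rw [Matrix.add_mulVec, hJw, add_zero, hLP, Matrix.sub_mulVec, hLw, vmv_mulVec]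
      have : be ⬝ᵥ w = 1 := by
        have : a = 0 := ha0
        rw [ha] at this; linarith
      rw [this, one_smul, sub_self]
    have := hPD.dotProduct_mulVec_pos hwne
    rw [star_trivial, hMPw, dotProduct_zero] at this
    exact lt_irrefl 0 this
  refine ⟨hane, ?_⟩
  -- Moore-Penrose verification
  apply pinv_spec
  rw [lap_delete hxy]
  set BP := Ld + a⁻¹ • Matrix.vecMulVec w w with hBP
  set LP := L - Matrix.vecMulVec be be with hLP2
  have hbeLd : Ldᵀ *ᵥ be = w := by rw [hLdT, hw]
  have hbw : be ⬝ᵥ w = 1 - a := by rw [ha]; ring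
  have hLPB : LP * BP = 1 - J := by
    rw [hLP2, hBP, Matrix.sub_mul, Matrix.mul_add, Matrix.mul_add, Matrix.mul_smul,
      Matrix.mul_smul, hLLd, mul_vmv, hLw, vmv_mul, hbeLd, mul_vmv, vmv_mulVec, hbw]
    have hsmul : Matrix.vecMulVec (((1 - a) • be)) w = (1 - a) • Matrix.vecMulVec be w := by
      ext i j; simp [Matrix.vecMulVec_apply]; ring
    rw [hsmul, smul_smul]
    have : a⁻¹ * (1 - a) = a⁻¹ - 1 := by field_simp
    rw [this]
    module
  have hBPT : BPᵀ = BP := by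
    rw [hBP, Matrix.transpose_add, hLdT, Matrix.transpose_smul, vmv_transpose]
  have hLPT : LPᵀ = LP := by
    rw [hLP2, Matrix.transpose_sub, (G.isSymm_lapMatrix (R := ℝ)).eq, vmv_transpose]
  have h1JT : ((1 : Matrix (Fin n) (Fin n) ℝ) - J)ᵀ = 1 - J := by
    rw [Matrix.transpose_sub, Matrix.transpose_one, hJ, Jmat_transpose]
  have hBPL : BP * LP = 1 - J := by
    have h := congrArg Matrix.transpose hLPB
    rw [Matrix.transpose_mul, hBPT, hLPT, h1JT] at h
    exact h
  have hJT : Jᵀ = J := Jmat_transpose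
  have hJLP : J * LP = 0 := by
    rw [hLP2, Matrix.mul_sub, Jmat_mul_lap, mul_vmv, hJbe, vmv_zero_left, sub_self]
  have hBPJ : BP * J = 0 := by
    rw [hBP, Matrix.add_mul, hLdJ, Matrix.smul_mul, vmv_mul, hJT, hJw, vmv_zero_right,
      smul_zero, add_zero]
  refine ⟨?_, ?_, ?_, ?_⟩
  · rw [hLPB, Matrix.sub_mul, one_mul, hJLP, sub_zero]
  · rw [mul_assoc, hLPB, Matrix.mul_sub, mul_one, hBPJ, sub_zero]
  · rw [hLPB, h1JT]
  · rw [hBPL, h1JT]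

end SM
/-- Marginal gain formula for information centrality. -/
theorem stmt_13 {n : ℕ} (G : SimpleGraph (Fin n)) (hG : G.Connected) (v x y : Fin n)
    (hxy : G.Adj x y) (hconn : (G.deleteEdges {s(x, y)}).Connected) :
    let L := G.lapMatrix ℝ
    let Ld := pinv L
    let be := incVec x y
    let a := 1 - be ⬝ᵥ Ld.mulVec be
    let b := be ⬝ᵥ (Ld * Ld).mulVec be
    let c := (Ld.mulVec be v) ^ 2
    infoCent (G.deleteEdges {s(x, y)}) v - infoCent G v =
      -((n : ℝ) * b + (n : ℝ) ^ 2 * c) /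
        (((n : ℝ) * a * Ld v v + (n : ℝ) * c + a * Ld.trace + b) *
          ((n : ℝ) * Ld v v + Ld.trace)) := by
  intro L Ld be a b c
  have hn : 0 < n := x.pos
  have hn2 : 1 < n := by
    have h := Fintype.one_lt_card_iff_nontrivial.2 ⟨x, y, hxy.ne⟩
    rwa [Fintype.card_fin] at h
  have hnR : (0:ℝ) < n := by exact_mod_cast hn
  set w : Fin n → ℝ := Ld *ᵥ be with hw
  set d := Ld v v with hd
  set t := Ld.trace with ht
  obtain ⟨hane, hpinv⟩ := sherman hG hxy hconn
  have ha' : a ≠ 0 := hane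
  have hLdT : Ldᵀ = Ld := Ld_transpose hn hG
  -- b = w ⬝ᵥ w
  have hb : b = w ⬝ᵥ w := by
    show be ⬝ᵥ (Ld * Ld) *ᵥ be = w ⬝ᵥ w
    rw [← Matrix.mulVec_mulVec, Matrix.dotProduct_mulVec]
    congr 1
    rw [← hLdT, Matrix.vecMul_transpose]
  -- c = (w v)^2
  have hc : c = w v * w v := by
    show (Ld *ᵥ be) v ^ 2 = w v * w v
    rw [← hw]; ring
  -- resistance distances
  have hRG : resDist G v = n * d + t := resDist_eq hn hG v
  have hRP : resDist (G.deleteEdges {s(x, y)}) v = (n * d + t) + a⁻¹ * (n * c + b) := by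
    have hR : resDist (G.deleteEdges {s(x, y)}) v = n * pinv ((G.deleteEdges {s(x, y)}).lapMatrix ℝ) v v
        + (pinv ((G.deleteEdges {s(x, y)}).lapMatrix ℝ)).trace := by
      convert resDist_eq hn hconn v
    rw [hR, hpinv]
    have he : (Ld + a⁻¹ • Matrix.vecMulVec w w) v v = d + a⁻¹ * (w v * w v) := by
      simp [Matrix.add_apply, Matrix.smul_apply, Matrix.vecMulVec_apply, hd]
    have htr : (Ld + a⁻¹ • Matrix.vecMulVec w w).trace = t + a⁻¹ * (w ⬝ᵥ w) := by
      rw [Matrix.trace_add, Matrix.trace_smul, vmv_trace, ht, smul_eq_mul]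
    rw [he, htr, hb, hc]
    ring
  have hRGpos : 0 < resDist G v := resDist_pos hn2 hG v
  have hRPpos : 0 < resDist (G.deleteEdges {s(x, y)}) v := resDist_pos hn2 hconn v
  have h1 : (n:ℝ) * d + t ≠ 0 := by rw [← hRG]; exact hRGpos.ne'
  have h2 : (n:ℝ) * d + t + a⁻¹ * (n * c + b) ≠ 0 := by rw [← hRP]; exact hRPpos.ne'
  have h3 : (n:ℝ) * a * d + n * c + a * t + b ≠ 0 := by
    have heq : a * ((n * d + t) + a⁻¹ * (n * c + b))
        = (n:ℝ) * a * d + n * c + a * t + b := by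
      rw [mul_add, ← mul_assoc, mul_inv_cancel₀ ha', one_mul]
      ring
    rw [← heq]
    exact mul_ne_zero ha' h2
  show (n:ℝ) / resDist (G.deleteEdges {s(x, y)}) v - (n:ℝ) / resDist G v = _
  rw [hRP, hRG]
  clear_value a b c d t
  have hRP2 : (n:ℝ) * d + t + a⁻¹ * ((n:ℝ) * c + b)
      = ((n:ℝ) * a * d + (n:ℝ) * c + a * t + b) / a := by
    field_simp
    ring
  rw [hRP2, div_div_eq_mul_div]
  rw [div_sub_div _ _ h3 h1, div_eq_div_iff (mul_ne_zero h3 h1) (mul_ne_zero h3 h1)]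
  ring
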